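/- Let r₀ > 0, K ≥ 1, and c₁, …, c_K ∈ ℝ^d (repetitions allowed). Consider the N = 2dK points consisting of c_k + r₀·e_j and c_k − r₀·e_j for k ∈ {1,…,K} and j ∈ {1,…,d}, where e_j is the j-th standard basis vector, and let x̄ ∈ ℝ^d be the average of these N points. Then the scatter matrix S = Σ over all N points p of (p − x̄)(p − x̄)ᵀ satisfies S ⪰ (N r₀² / d)·I in the positive semidefinite (Loewner) order; consequently S is invertible and ‖S⁻¹‖ ≤ d / (N r₀²) in operator norm. -/

import Mathlib

open Matrix in
theorem aux_inv_bound (d : ℕ) (A : Matrix (Fin d) (Fin d) ℝ) (hA : A.IsHermitian)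
    (cst : ℝ) (hc : 0 < cst)
    (h : ∀ x : Fin d → ℝ, cst * (x ⬝ᵥ x) ≤ x ⬝ᵥ (A *ᵥ x)) :
    IsUnit A ∧ ‖Matrix.toEuclideanCLM (𝕜 := ℝ) A⁻¹‖ ≤ cst⁻¹ := by
  have hpd : A.PosDef := by
    refine Matrix.PosDef.of_dotProduct_mulVec_pos hA fun x hx => ?_
    rw [star_trivial]
    have h0 : (0:ℝ) < x ⬝ᵥ x := by
      have hnn : (0:ℝ) ≤ x ⬝ᵥ x := Finset.sum_nonneg fun i _ => mul_self_nonneg _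
      exact hnn.lt_of_ne fun e => hx (dotProduct_self_eq_zero.mp e.symm)
    calc (0:ℝ) < cst * (x ⬝ᵥ x) := by positivity
      _ ≤ x ⬝ᵥ (A *ᵥ x) := h x
  have hdet : IsUnit A.det := isUnit_iff_ne_zero.mpr (ne_of_gt hpd.det_pos)
  have hunit : IsUnit A := (Matrix.isUnit_iff_isUnit_det A).mpr hdet
  refine ⟨hunit, ?_⟩
  set T := Matrix.toEuclideanCLM (𝕜 := ℝ) A with hT
  set T' := Matrix.toEuclideanCLM (𝕜 := ℝ) A⁻¹ with hT'
  have hTT' : ∀ x : EuclideanSpace ℝ (Fin d), T (T' x) = x := by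
    intro x
    have : T * T' = 1 := by
      rw [hT, hT', ← _root_.map_mul, Matrix.mul_nonsing_inv A hdet, _root_.map_one]
    calc T (T' x) = (T * T') x := rfl
      _ = x := by rw [this]; rfl
  refine ContinuousLinearMap.opNorm_le_bound _ (by positivity) fun x => ?_
  set y := T' x with hy
  have key : cst * ‖y‖^2 ≤ ‖y‖ * ‖x‖ := by
    have h1 : cst * ‖y‖^2 ≤ inner ℝ y (T y) := by
      have hnorm : ‖y‖^2 = (WithLp.equiv _ _ y) ⬝ᵥ (WithLp.equiv _ _ y) := by
        rw [EuclideanSpace.norm_sq_eq, dotProduct]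
        exact Finset.sum_congr rfl fun i _ => by rw [Real.norm_eq_abs, sq_abs, sq]; rfl
      have hinner : (inner ℝ y (T y) : ℝ) =
          (WithLp.equiv _ _ y) ⬝ᵥ (A *ᵥ (WithLp.equiv _ _ y)) := by
        rw [hT]
        exact Matrix.inner_toEuclideanCLM A y y
      rw [hnorm, hinner]
      exact h _
    calc cst * ‖y‖^2 ≤ inner ℝ y (T y) := h1
      _ ≤ ‖y‖ * ‖T y‖ := real_inner_le_norm _ _
      _ = ‖y‖ * ‖x‖ := by rw [hTT' x]
  rcases eq_or_ne y 0 with h0 | h0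
  · rw [hy] at h0 ⊢; rw [h0]; simp; positivity
  · have hy0 : 0 < ‖y‖ := norm_pos_iff.mpr h0
    rw [inv_mul_eq_div, le_div_iff₀ hc]
    nlinarith [key]


open Matrix in
private theorem aux_dot_vmv {d : ℕ} (v x : Fin d → ℝ) :
    x ⬝ᵥ (Matrix.vecMulVec v v *ᵥ x) = (v ⬝ᵥ x)^2 := by
  simp only [dotProduct, Matrix.mulVec, Matrix.vecMulVec_apply, sq, Finset.mul_sum,
    Finset.sum_mul]
  rw [Finset.sum_comm]
  exact Finset.sum_congr rfl fun i _ => Finset.sum_congr rfl fun j _ => by ring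

open Matrix in
private theorem aux_sum_mulVec {ι : Type*} [Fintype ι] {d : ℕ}
    (M : ι → Matrix (Fin d) (Fin d) ℝ) (x : Fin d → ℝ) :
    (∑ i, M i) *ᵥ x = ∑ i, M i *ᵥ x := by
  ext j
  simp only [Matrix.mulVec, dotProduct, Matrix.sum_apply, Finset.sum_apply,
    Finset.sum_mul]
  exact Finset.sum_comm

open Matrix in
private theorem aux_dot_sum {ι : Type*} [Fintype ι] {d : ℕ}
    (x : Fin d → ℝ) (v : ι → Fin d → ℝ) :
    x ⬝ᵥ (∑ i, v i) = ∑ i, x ⬝ᵥ v i := by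
  simp only [dotProduct, Finset.sum_apply, Finset.mul_sum]
  exact Finset.sum_comm

open Matrix in
theorem scatter_matrix_bound
    (d K : ℕ) (hK : 1 ≤ K) (r₀ : ℝ) (hr₀ : 0 < r₀)
    (c : Fin K → (Fin d → ℝ))
    (p : Fin K × Fin d × Bool → (Fin d → ℝ))
    (hp : ∀ (k : Fin K) (j : Fin d) (s : Bool),
      p (k, j, s) = c k + (if s then r₀ else -r₀) • (Pi.single j 1 : Fin d → ℝ))
    (N : ℕ) (hN : N = 2 * d * K)
    (xbar : Fin d → ℝ) (hxbar : xbar = (N : ℝ)⁻¹ • ∑ i, p i)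
    (S : Matrix (Fin d) (Fin d) ℝ)
    (hS : S = ∑ i, Matrix.vecMulVec (p i - xbar) (p i - xbar)) :
    (S - ((N : ℝ) * r₀ ^ 2 / (d : ℝ)) • (1 : Matrix (Fin d) (Fin d) ℝ)).PosSemidef ∧
      IsUnit S ∧
      ‖Matrix.toEuclideanCLM (𝕜 := ℝ) S⁻¹‖ ≤ (d : ℝ) / ((N : ℝ) * r₀ ^ 2) := by
  rcases Nat.eq_zero_or_pos d with hd0 | hd
  · subst hd0
    refine ⟨Matrix.PosSemidef.of_dotProduct_mulVec_nonneg (Subsingleton.elim _ _) fun x => by simp [dotProduct], ?_, ?_⟩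
    · rw [Subsingleton.elim S 1]; exact isUnit_one
    · rw [Subsingleton.elim (Matrix.toEuclideanCLM (𝕜 := ℝ) S⁻¹) 0, norm_zero]
      positivity
  · -- d ≥ 1
    set cst : ℝ := 2 * (K : ℝ) * r₀ ^ 2 with hcst
    have hd' : (0:ℝ) < (d:ℝ) := by exact_mod_cast hd
    have hK' : (0:ℝ) < (K:ℝ) := by exact_mod_cast hK
    have hcst_pos : 0 < cst := by positivity
    have hcst_eq : (N : ℝ) * r₀ ^ 2 / (d : ℝ) = cst := by
      subst hN; push_cast; field_simp; ring
    -- Hermitian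
    have hherm : S.IsHermitian := by
      rw [Matrix.IsHermitian, hS]
      ext i j
      simp only [Matrix.conjTranspose_apply, Matrix.sum_apply, Matrix.vecMulVec_apply,
        star_trivial]
      exact Finset.sum_congr rfl fun _ _ => mul_comm _ _
    -- Quadratic form identity
    have hquad : ∀ x : Fin d → ℝ, x ⬝ᵥ (S *ᵥ x) = ∑ k : Fin K, ∑ j : Fin d,
        (((c k - xbar) ⬝ᵥ x + r₀ * x j)^2 + ((c k - xbar) ⬝ᵥ x - r₀ * x j)^2) := by
      intro x
      have h1 : x ⬝ᵥ (S *ᵥ x) = ∑ i, ((p i - xbar) ⬝ᵥ x)^2 := by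
        rw [hS, aux_sum_mulVec, aux_dot_sum]
        exact Finset.sum_congr rfl fun i _ => aux_dot_vmv _ _
      rw [h1, Fintype.sum_prod_type]
      refine Finset.sum_congr rfl fun k _ => ?_
      rw [Fintype.sum_prod_type]
      refine Finset.sum_congr rfl fun j _ => ?_
      rw [Fintype.sum_bool, hp k j true, hp k j false]
      simp only [reduceIte, sub_dotProduct, add_dotProduct,
        smul_dotProduct, single_dotProduct, smul_eq_mul, one_mul,
        Bool.false_eq_true, if_false, if_true]
      ring
    -- Key inequality
    have hkey : ∀ x : Fin d → ℝ, cst * (x ⬝ᵥ x) ≤ x ⬝ᵥ (S *ᵥ x) := by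
      intro x
      rw [hquad x]
      have hlhs : cst * (x ⬝ᵥ x) = ∑ _k : Fin K, ∑ j : Fin d, 2 * r₀^2 * (x j * x j) := by
        simp only [Finset.sum_const, Finset.card_univ, Fintype.card_fin, nsmul_eq_mul,
          ← Finset.mul_sum]
        rw [hcst, dotProduct]
        ring
      rw [hlhs]
      refine Finset.sum_le_sum fun k _ => Finset.sum_le_sum fun j _ => ?_
      nlinarith [sq_nonneg ((c k - xbar) ⬝ᵥ x), sq_nonneg (x j)]
    -- Assemble
    have hpsd : (S - cst • (1 : Matrix (Fin d) (Fin d) ℝ)).PosSemidef := by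
      refine Matrix.PosSemidef.of_dotProduct_mulVec_nonneg (hherm.sub (by simp [Matrix.IsHermitian])) fun x => ?_
      rw [star_trivial, Matrix.sub_mulVec, dotProduct_sub, Matrix.smul_mulVec,
        Matrix.one_mulVec, dotProduct_smul, smul_eq_mul]
      exact sub_nonneg.mpr (hkey x)
    obtain ⟨hunit, hbound⟩ := aux_inv_bound d S hherm cst hcst_pos hkey
    refine ⟨by rw [hcst_eq]; exact hpsd, hunit, ?_⟩
    calc ‖Matrix.toEuclideanCLM (𝕜 := ℝ) S⁻¹‖ ≤ cst⁻¹ := hbound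
      _ = (d : ℝ) / ((N : ℝ) * r₀ ^ 2) := by
          rw [← hcst_eq, inv_div]
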